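/- Let K be a field of characteristic 0 and u,v ∈ K[x,y]. Suppose p and q are one-variable polynomials over K such that deg(u+p(v)) ≥ deg u (the (ET2) step does not decrease the sum of degrees) and deg(u+p(v)) + deg(v+q(u+p(v))) < deg u + deg v (the subsequent (ET2') step makes the total decrease). Then there is a single elementary transformation among (ET1), (ET1'), (ET2), (ET2'), (ET3) taking (u,v) to a pair (u',v') with deg u' + deg v' < deg u + deg v. -/

import Mathlib

open MvPolynomial

section Helpers

variable {K : Type*} [Field K] {σ : Type*}

lemma aux_hc_top_ne_zero (f : MvPolynomial σ K) (hf : f ≠ 0) :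
    homogeneousComponent f.totalDegree f ≠ 0 := by
  obtain ⟨d, hd, hdeg⟩ :=
    Finset.exists_mem_eq_sup f.support (support_nonempty.mpr hf)
      (fun d : (σ →₀ ℕ) => d.sum fun _ e => e)
  intro h0
  have hcd := coeff_homogeneousComponent (n := f.totalDegree) (φ := f) d
  rw [h0] at hcd
  have hdd : Finsupp.degree d = f.totalDegree := by
    rw [show f.totalDegree = d.sum fun _ e => e from hdeg]
    simp [Finsupp.degree, Finsupp.sum]
    rfl
  rw [if_pos hdd, coeff_zero] at hcd
  exact (mem_support_iff.mp hd) hcd.symm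

lemma aux_tdeg_mul (f g : MvPolynomial σ K) (hf : f ≠ 0) (hg : g ≠ 0) :
    (f * g).totalDegree = f.totalDegree + g.totalDegree := by
  classical
  set a := f.totalDegree with ha
  set b := g.totalDegree with hb
  refine le_antisymm (totalDegree_mul f g) ?_
  by_contra hlt
  push_neg at hlt
  have hz : homogeneousComponent (a + b) (f * g) = 0 := homogeneousComponent_eq_zero _ _ hlt
  have hexp : homogeneousComponent (a + b) (f * g) =
      homogeneousComponent a f * homogeneousComponent b g := by
    conv_lhs => rw [← sum_homogeneousComponent f, ← sum_homogeneousComponent g]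
    rw [Finset.sum_mul_sum, map_sum]
    rw [Finset.sum_congr rfl (fun i _ => map_sum (homogeneousComponent (a + b)) _ _)]
    have hterm : ∀ i ∈ Finset.range (a + 1), ∀ j ∈ Finset.range (b + 1),
        homogeneousComponent (a + b) (homogeneousComponent i f * homogeneousComponent j g) =
          if i = a ∧ j = b then homogeneousComponent a f * homogeneousComponent b g else 0 := by
      intro i hi j hj
      have hmem : homogeneousComponent i f * homogeneousComponent j g ∈
          homogeneousSubmodule σ K (i + j) := by
        rw [mem_homogeneousSubmodule]
        exact (homogeneousComponent_isHomogeneous i f).mul (homogeneousComponent_isHomogeneous j g)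
      rw [homogeneousComponent_of_mem hmem]
      simp only [Finset.mem_range] at hi hj
      by_cases hij : i = a ∧ j = b
      · rw [if_pos (by omega), if_pos hij, hij.1, hij.2]
      · rw [if_neg (by omega), if_neg hij]
    rw [Finset.sum_congr rfl fun i hi => Finset.sum_congr rfl fun j hj => hterm i hi j hj]
    simp [ite_and, Finset.sum_ite_eq', Finset.mem_range]
  rw [hexp] at hz
  exact mul_ne_zero (aux_hc_top_ne_zero f hf) (aux_hc_top_ne_zero g hg) hz

lemma aux_tdeg_pow (f : MvPolynomial σ K) (hf : f ≠ 0) (k : ℕ) :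
    (f ^ k).totalDegree = k * f.totalDegree := by
  induction k with
  | zero => simp
  | succ k ih =>
    rw [pow_succ, aux_tdeg_mul _ _ (pow_ne_zero _ hf) hf, ih]
    ring

lemma aux_tdeg_C_mul {a : K} (ha : a ≠ 0) (f : MvPolynomial σ K) :
    (C a * f).totalDegree = f.totalDegree := by
  by_cases hf : f = 0
  · simp [hf]
  · rw [aux_tdeg_mul _ _ (by simpa using ha) hf, totalDegree_C, zero_add]

lemma aux_tdeg_add_C (f : MvPolynomial σ K) (c : K) :
    (f + C c).totalDegree = f.totalDegree := by
  rcases Nat.eq_zero_or_pos f.totalDegree with h0 | hpos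
  · have h1 : (f + C c).totalDegree ≤ max f.totalDegree (C c : MvPolynomial σ K).totalDegree :=
      totalDegree_add _ _
    rw [totalDegree_C, h0] at h1
    omega
  · rw [totalDegree_add_eq_left_of_totalDegree_lt]
    rwa [totalDegree_C]

lemma aux_tdeg_aeval_le (f : MvPolynomial σ K) (g : Polynomial K) :
    (Polynomial.aeval f g).totalDegree ≤ g.natDegree * f.totalDegree := by
  rw [Polynomial.aeval_eq_sum_range]
  refine (totalDegree_finset_sum _ _).trans (Finset.sup_le fun i hi => ?_)
  refine (totalDegree_smul_le _ _).trans ((totalDegree_pow _ _).trans ?_)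
  exact Nat.mul_le_mul_right _ (by simpa using Nat.lt_succ_iff.mp (Finset.mem_range.mp hi))

lemma aux_tdeg_aeval_eq (f : MvPolynomial σ K) (hf : 1 ≤ f.totalDegree) (g : Polynomial K) :
    (Polynomial.aeval f g).totalDegree = g.natDegree * f.totalDegree := by
  have hf0 : f ≠ 0 := by rintro rfl; simp at hf
  rcases Nat.eq_zero_or_pos g.natDegree with hd0 | hd
  · obtain ⟨c, rfl⟩ := Polynomial.natDegree_eq_zero.mp hd0
    simp [algebraMap_eq]
  · have hg0 : g ≠ 0 := fun h => by simp [h] at hd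
    have hsplit : (Polynomial.aeval f g) =
        Polynomial.aeval f g.eraseLead + C g.leadingCoeff * f ^ g.natDegree := by
      conv_lhs => rw [← Polynomial.eraseLead_add_C_mul_X_pow g]
      rw [map_add, map_mul, map_pow, Polynomial.aeval_X, Polynomial.aeval_C, algebraMap_eq]
    have hlead : (C g.leadingCoeff * f ^ g.natDegree).totalDegree
        = g.natDegree * f.totalDegree := by
      rw [aux_tdeg_C_mul (Polynomial.leadingCoeff_ne_zero.mpr hg0), aux_tdeg_pow f hf0]
    have hsmall : (Polynomial.aeval f g.eraseLead).totalDegree < g.natDegree * f.totalDegree := by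
      refine lt_of_le_of_lt (aux_tdeg_aeval_le f g.eraseLead) ?_
      refine lt_of_le_of_lt (Nat.mul_le_mul_right _ (Polynomial.eraseLead_natDegree_le g)) ?_
      exact mul_lt_mul_of_pos_right (Nat.sub_lt hd one_pos) (lt_of_lt_of_le one_pos hf)
    rw [hsplit, totalDegree_add_eq_right_of_totalDegree_lt (by rw [hlead]; exact hsmall)]
    exact hlead

end Helpers

/-- The elementary transformations (ET1), (ET1'), (ET2), (ET2'), (ET3) on pairs of
polynomials in `K[x,y]`.  In (ET1)/(ET1') the quotient is specified by the equation
`quotient * denominator = numerator`, together with the divisibility condition. -/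
def ElemTrans {K : Type*} [Field K]
    (p p' : MvPolynomial (Fin 2) K × MvPolynomial (Fin 2) K) : Prop :=
  -- (ET1) : (u, v) ↦ ((u + a)/(c·v + b), v)
  (∃ a b c : K, MvPolynomial.C c * p.2 + MvPolynomial.C b ≠ 0 ∧
      (MvPolynomial.C c * p.2 + MvPolynomial.C b) ∣ (p.1 + MvPolynomial.C a) ∧
      p'.1 * (MvPolynomial.C c * p.2 + MvPolynomial.C b) = p.1 + MvPolynomial.C a ∧
      p'.2 = p.2) ∨
  -- (ET1') : (u, v) ↦ (u, (v + a)/(c·u + b))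
  (∃ a b c : K, MvPolynomial.C c * p.1 + MvPolynomial.C b ≠ 0 ∧
      (MvPolynomial.C c * p.1 + MvPolynomial.C b) ∣ (p.2 + MvPolynomial.C a) ∧
      p'.2 * (MvPolynomial.C c * p.1 + MvPolynomial.C b) = p.2 + MvPolynomial.C a ∧
      p'.1 = p.1) ∨
  -- (ET2) : (u, v) ↦ (u + q(v), v)
  (∃ q : Polynomial K, p' = (p.1 + Polynomial.aeval p.2 q, p.2)) ∨
  -- (ET2') : (u, v) ↦ (u, v + q(u))
  (∃ q : Polynomial K, p' = (p.1, p.2 + Polynomial.aeval p.1 q)) ∨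
  -- (ET3) : (u, v) ↦ (v, u)
  p' = (p.2, p.1)

/-- **reduction of an (ET2)–(ET2') peak.** If applying (ET2) with `p` to
`(u, v)` does not decrease the sum of degrees, but the subsequent (ET2') with `q`
makes the total sum of degrees decrease, then a single elementary transformation already
decreases the sum of degrees of `(u, v)`. -/
theorem et2_et2'_peak_reduction {K : Type*} [Field K] [CharZero K]
    (u v : MvPolynomial (Fin 2) K) (p q : Polynomial K)
    (h1 : u.totalDegree ≤ (u + Polynomial.aeval v p).totalDegree)
    (h2 : (u + Polynomial.aeval v p).totalDegree +
        (v + Polynomial.aeval (u + Polynomial.aeval v p) q).totalDegree <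
      u.totalDegree + v.totalDegree) :
    ∃ p' : MvPolynomial (Fin 2) K × MvPolynomial (Fin 2) K,
      ElemTrans (u, v) p' ∧
      p'.1.totalDegree + p'.2.totalDegree < u.totalDegree + v.totalDegree := by
  classical
  set u' := u + Polynomial.aeval v p with hu'
  set Q := Polynomial.aeval u' q with hQdef
  set w := v + Q with hw
  set n := u.totalDegree with hn
  set m := v.totalDegree with hm
  -- Step 1: deg w < m
  have hwm : w.totalDegree < m := by
    have h3 : n + m ≤ u'.totalDegree + m := Nat.add_le_add_right h1 m
    omega
  have hm1 : 1 ≤ m := lt_of_le_of_lt (Nat.zero_le _) hwm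
  -- Step 2: deg Q = m
  have hQm : Q.totalDegree = m := by
    rcases lt_trichotomy Q.totalDegree m with h | h | h
    · exfalso
      have hv : v = w + (-Q) := by rw [hw]; ring
      have : m ≤ max w.totalDegree Q.totalDegree := by
        calc m = (w + (-Q)).totalDegree := by rw [← hv]
          _ ≤ max w.totalDegree (-Q).totalDegree := totalDegree_add _ _
          _ = max w.totalDegree Q.totalDegree := by rw [totalDegree_neg]
      omega
    · exact h
    · exfalso
      have hQ' : Q = w + (-v) := by rw [hw]; ring
      have : Q.totalDegree ≤ max w.totalDegree m := by
        calc Q.totalDegree = (w + (-v)).totalDegree := by rw [← hQ']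
          _ ≤ max w.totalDegree (-v).totalDegree := totalDegree_add _ _
          _ = max w.totalDegree m := by rw [totalDegree_neg]
      omega
  -- Step 3: deg u' ≥ 1
  have hn'1 : 1 ≤ u'.totalDegree := by
    by_contra h
    push_neg at h
    have h0 : u'.totalDegree = 0 := by omega
    have hle : Q.totalDegree ≤ q.natDegree * u'.totalDegree := aux_tdeg_aeval_le _ _
    rw [h0, mul_zero] at hle
    omega
  -- Step 4: m = deg q * deg u'
  have hmq : m = q.natDegree * u'.totalDegree := by
    rw [← hQm, hQdef]; exact aux_tdeg_aeval_eq u' hn'1 q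
  have hdq1 : 1 ≤ q.natDegree := by
    rcases Nat.eq_zero_or_pos q.natDegree with h | h
    · rw [h, zero_mul] at hmq; omega
    · exact h
  rcases Nat.eq_zero_or_pos p.natDegree with hp0 | hp1
  · -- Case A: p is a constant C c, use (ET2') with q ∘ (X + C c)
    obtain ⟨c, hc⟩ := Polynomial.natDegree_eq_zero.mp hp0
    have hu'c : u' = u + C c := by
      rw [hu', ← hc]; simp [algebraMap_eq]
    have haev : Polynomial.aeval u (q.comp (Polynomial.X + Polynomial.C c)) = Q := by
      rw [Polynomial.aeval_comp, hQdef]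
      congr 1
      simp [hu'c, algebraMap_eq]
    refine ⟨(u, w), Or.inr (Or.inr (Or.inr (Or.inl
      ⟨q.comp (Polynomial.X + Polynomial.C c), ?_⟩))), ?_⟩
    · simp only
      rw [haev, ← hw]
    · simp only
      omega
  · -- Case B: deg p ≥ 1
    have hP : (Polynomial.aeval v p).totalDegree = p.natDegree * m := aux_tdeg_aeval_eq v hm1 p
    -- q linear data
    rcases lt_trichotomy (p.natDegree * m) n with hlt | heq | hgt
    · -- impossible
      exfalso
      have hn' : u'.totalDegree ≤ n := by
        refine (totalDegree_add _ _).trans ?_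
        rw [hP]; omega
      have hn'eq : u'.totalDegree = n := le_antisymm hn' h1
      have h3 : n ≤ m := by
        rw [hmq, hn'eq]
        calc n = 1 * n := (one_mul n).symm
          _ ≤ q.natDegree * n := Nat.mul_le_mul_right n hdq1
      have h4 : m ≤ p.natDegree * m := by
        calc m = 1 * m := (one_mul m).symm
          _ ≤ p.natDegree * m := Nat.mul_le_mul_right m hp1
      omega
    · -- main case: use (ET2)
      have hn' : u'.totalDegree ≤ n := by
        refine (totalDegree_add _ _).trans ?_
        rw [hP, heq, max_self]
      have hn'eq : u'.totalDegree = n := le_antisymm hn' h1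
      have h3 : n ≤ m := by
        rw [hmq, hn'eq]
        calc n = 1 * n := (one_mul n).symm
          _ ≤ q.natDegree * n := Nat.mul_le_mul_right n hdq1
      have h4 : m ≤ n := by
        rw [← heq]
        calc m = 1 * m := (one_mul m).symm
          _ ≤ p.natDegree * m := Nat.mul_le_mul_right m hp1
      have hnm : n = m := le_antisymm h3 h4
      have hdq : q.natDegree = 1 := by
        have h6 : m = q.natDegree * n := by rw [← hn'eq]; exact hmq
        have hn1 : 0 < n := by omega
        exact Nat.eq_of_mul_eq_mul_right hn1 (by rw [one_mul]; linarith)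
      set α := q.coeff 1 with hαdef
      set β := q.coeff 0 with hβdef
      have hq0 : q ≠ 0 := fun h => by rw [h] at hdq; simp at hdq
      have hα : α ≠ 0 := by
        have := Polynomial.leadingCoeff_ne_zero.mpr hq0
        rwa [Polynomial.leadingCoeff, hdq] at this
      have hqrep : q = Polynomial.C α * Polynomial.X + Polynomial.C β :=
        Polynomial.eq_X_add_C_of_natDegree_le_one (by omega)
      have hQrep : Q = C α * u' + C β := by
        rw [hQdef]
        conv_lhs => rw [hqrep]
        simp [algebraMap_eq]
      set pt := Polynomial.C α⁻¹ * Polynomial.X + (p + Polynomial.C (α⁻¹ * β)) with hpt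
      refine ⟨(u + Polynomial.aeval v pt, v), Or.inr (Or.inr (Or.inl ⟨pt, rfl⟩)), ?_⟩
      have haevpt : Polynomial.aeval v pt =
          C α⁻¹ * v + (Polynomial.aeval v p + C (α⁻¹ * β)) := by
        rw [hpt]; simp [algebraMap_eq]
      have hCinv : (C α⁻¹ : MvPolynomial (Fin 2) K) * C α = 1 := by
        rw [← C_mul, inv_mul_cancel₀ hα, C_1]
      have hval : u + Polynomial.aeval v pt = C α⁻¹ * w := by
        rw [haevpt, hw, hQrep, hu', C_mul]
        linear_combination -(u + Polynomial.aeval v p) * hCinv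
      simp only
      rw [hval, aux_tdeg_C_mul (inv_ne_zero hα) w]
      have : u'.totalDegree + w.totalDegree < n + m := h2
      omega
    · -- impossible
      exfalso
      have hn'eq : u'.totalDegree = p.natDegree * m := by
        rw [hu', totalDegree_add_eq_right_of_totalDegree_lt (by rw [hP]; exact hgt), hP]
      have hmul1 : q.natDegree * p.natDegree = 1 := by
        have h6 : m = q.natDegree * (p.natDegree * m) := by rw [← hn'eq]; exact hmq
        exact Nat.eq_of_mul_eq_mul_right (show 0 < m by omega)
          (by rw [one_mul, mul_assoc]; linarith)
      have hdq : q.natDegree = 1 := Nat.eq_one_of_mul_eq_one_right hmul1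
      have hdp : p.natDegree = 1 := Nat.eq_one_of_mul_eq_one_left hmul1
      have hn'm : u'.totalDegree = m := by rw [hn'eq, hdp, one_mul]
      set α := q.coeff 1 with hαdef
      set β := q.coeff 0 with hβdef
      set γ := p.coeff 1 with hγdef
      set δ := p.coeff 0 with hδdef
      have hq0 : q ≠ 0 := fun h => by rw [h] at hdq; simp at hdq
      have hα : α ≠ 0 := by
        have := Polynomial.leadingCoeff_ne_zero.mpr hq0
        rwa [Polynomial.leadingCoeff, hdq] at this
      have hqrep : q = Polynomial.C α * Polynomial.X + Polynomial.C β :=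
        Polynomial.eq_X_add_C_of_natDegree_le_one (by omega)
      have hprep : p = Polynomial.C γ * Polynomial.X + Polynomial.C δ :=
        Polynomial.eq_X_add_C_of_natDegree_le_one (by omega)
      have hQrep : Q = C α * u' + C β := by
        rw [hQdef]
        conv_lhs => rw [hqrep]
        simp [algebraMap_eq]
      have haevp : Polynomial.aeval v p = C γ * v + C δ := by
        conv_lhs => rw [hprep]
        simp [algebraMap_eq]
      have hw2 : w = C (1 + α * γ) * v + (C α * u + C (α * δ + β)) := by
        rw [hw, hQrep, hu', haevp, C_add, C_mul, C_add, C_mul, C_1]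
        ring
      have hs : 1 + α * γ = 0 := by
        by_contra hs
        have h5 : (C α * u + C (α * δ + β)).totalDegree < m := by
          rw [aux_tdeg_add_C, aux_tdeg_C_mul hα]
          -- n < p.natDegree * m = m
          rw [hdp, one_mul] at hgt
          exact hgt
        have h6 : w.totalDegree = m := by
          rw [hw2, totalDegree_add_eq_left_of_totalDegree_lt
            (by rw [aux_tdeg_C_mul hs v]; exact h5), aux_tdeg_C_mul hs v]
        omega
      have hw3 : w = C α * u + C (α * δ + β) := by
        rw [hw2, hs, C_0, zero_mul, zero_add]
      have hwn : w.totalDegree = n := by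
        rw [hw3, aux_tdeg_add_C, aux_tdeg_C_mul hα]
      have : u'.totalDegree + w.totalDegree < n + m := h2
      rw [hn'm, hwn] at this
      omega
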